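/- Let K be a field, let D ∈ K[X] be a polynomial that is not a square in K[X], and let δ ∈ K((T)) satisfy δ² = ι D. Let r, s ∈ K[X] with s ≠ 0 and s dividing D − r², and set α = (ι r + δ)·(ι s)⁻¹. Let a ∈ K[X] satisfy orderTop(α − ι a) > 0. Then α ≠ ι a; and setting α' = (α − ι a)⁻¹ and r' = a·s − r, the polynomial s divides D − r'², the polynomial s' = (D − r'²)/s is nonzero, and α' = (ι r' + δ)·(ι s')⁻¹. -/

import Mathlib

open Polynomial

/-- The ring homomorphism `K[X] → K((T))` sending `X` to `T⁻¹`. -/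
noncomputable def iota {K : Type*} [Field K] : Polynomial K →+* LaurentSeries K :=
  Polynomial.eval₂RingHom (HahnSeries.C : K →+* LaurentSeries K)
    (HahnSeries.single (-1 : ℤ) (1 : K))

lemma hahn_coeff_sum {Γ R ι : Type*} [PartialOrder Γ] [AddCommMonoid R]
    (s : Finset ι) (f : ι → HahnSeries Γ R) (g : Γ) :
    (∑ i ∈ s, f i).coeff g = ∑ i ∈ s, (f i).coeff g :=
  map_sum (HahnSeries.coeff.addMonoidHom g) f s

lemma iota_coeff {K : Type*} [Field K] (f : Polynomial K) :
    (iota f).coeff (-(f.natDegree : ℤ)) = f.leadingCoeff := by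
  rw [iota, coe_eval₂RingHom, Polynomial.eval₂_eq_sum, Polynomial.sum_def]
  rw [hahn_coeff_sum]
  have hterm : ∀ i : ℕ, HahnSeries.C (f.coeff i) * HahnSeries.single (-1 : ℤ) (1 : K) ^ i
      = HahnSeries.single (-(i : ℤ)) (f.coeff i) := by
    intro i
    rw [HahnSeries.single_pow, HahnSeries.C_apply, HahnSeries.single_mul_single]
    simp
  simp only [hterm]
  by_cases hf : f = 0
  · simp [hf]
  rw [Finset.sum_eq_single f.natDegree]
  · exact HahnSeries.coeff_single_same _ _
  · intro b _ hb
    exact HahnSeries.coeff_single_of_ne (by simpa using fun h => hb (by exact_mod_cast h.symm))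
  · intro h
    simp [Polynomial.notMem_support_iff.mp h]

lemma iota_injective {K : Type*} [Field K] : Function.Injective (iota (K := K)) := by
  intro f g h
  by_contra hne
  have hfg : f - g ≠ 0 := sub_ne_zero.mpr hne
  have : (iota (f - g)).coeff (-((f - g).natDegree : ℤ)) = (f - g).leadingCoeff := iota_coeff _
  rw [map_sub, h, sub_self] at this
  simp at this
  exact hfg (Polynomial.leadingCoeff_eq_zero.mp this.symm)

/-- One step of the continued fraction algorithm in terms of the polynomial data `(r, s)`:
if `α = (ι r + δ)/ι s` with `s ∣ D - r²`, and `a` is the polynomial part of `α`, then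
`α ≠ ι a` and `(α - ι a)⁻¹ = (ι r' + δ)/ι s'` where `r' = a s - r`, `s' = (D - r'²)/s`. -/
theorem continued_fraction_step_rs {K : Type*} [Field K]
    (D : Polynomial K) (hD : ¬ ∃ E : Polynomial K, D = E ^ 2)
    (δ : LaurentSeries K) (hδ : δ ^ 2 = iota D)
    (r s : Polynomial K) (hs : s ≠ 0) (hdvd : s ∣ D - r ^ 2)
    (a : Polynomial K)
    (ha : 0 < ((iota r + δ) * (iota s)⁻¹ - iota a).orderTop) :
    (iota r + δ) * (iota s)⁻¹ ≠ iota a ∧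
    s ∣ D - (a * s - r) ^ 2 ∧
    (D - (a * s - r) ^ 2) / s ≠ 0 ∧
    ((iota r + δ) * (iota s)⁻¹ - iota a)⁻¹ =
      (iota (a * s - r) + δ) * (iota ((D - (a * s - r) ^ 2) / s))⁻¹ := by
  have hι := iota_injective (K := K)
  have hdvd' : s ∣ D - (a * s - r) ^ 2 := by
    have h : D - (a * s - r) ^ 2 = (D - r ^ 2) + s * (2 * a * r - a ^ 2 * s) := by ring
    rw [h]; exact dvd_add hdvd (Dvd.intro _ rfl)
  have hNs : s * ((D - (a * s - r) ^ 2) / s) = D - (a * s - r) ^ 2 :=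
    EuclideanDomain.mul_div_cancel' hs hdvd'
  have hN0 : D - (a * s - r) ^ 2 ≠ 0 := fun h => hD ⟨a * s - r, sub_eq_zero.mp h⟩
  have hs'0 : (D - (a * s - r) ^ 2) / s ≠ 0 := fun h => hN0 (by rw [← hNs, h, mul_zero])
  have hsι : iota s ≠ 0 := fun h => hs (hι (h.trans (map_zero _).symm))
  have hs'ι : iota ((D - (a * s - r) ^ 2) / s) ≠ 0 :=
    fun h => hs'0 (hι (h.trans (map_zero _).symm))
  have hδr' : δ ≠ iota (a * s - r) := by
    intro h
    apply hN0
    rw [sub_eq_zero]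
    exact hι (by rw [← hδ, h, ← map_pow])
  have hne : (iota r + δ) * (iota s)⁻¹ ≠ iota a := by
    intro h
    apply hδr'
    field_simp at h
    rw [map_sub, map_mul]
    linear_combination h
  have hsub : (iota r + δ) * (iota s)⁻¹ - iota a
      = (δ - iota (a * s - r)) * (iota s)⁻¹ := by
    rw [map_sub, map_mul]
    field_simp
    ring
  have key : iota s * iota ((D - (a * s - r) ^ 2) / s) = δ ^ 2 - iota (a * s - r) ^ 2 := by
    rw [← map_mul, hNs, map_sub, map_pow, hδ]
  have hsubne : δ - iota (a * s - r) ≠ 0 := sub_ne_zero.mpr hδr'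
  have main : (δ - iota (a * s - r)) * ((iota (a * s - r) + δ)
      * (iota ((D - (a * s - r) ^ 2) / s))⁻¹) = iota s := by
    have hx : iota (a * s - r) = iota a * iota s - iota r := by rw [map_sub, map_mul]
    field_simp
    linear_combination -key
  refine ⟨hne, hdvd', hs'0, ?_⟩
  rw [hsub, mul_inv, inv_inv, ← main, inv_mul_cancel_left₀ hsubne]
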